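/- Let ι be a finite type and B : 𝒳₁ → ι a map such that: (i) whenever B a = B b, for every y ∈ 𝒳₂ with p a y > 0 and p b y > 0 one has f a y = f b y; and (ii) whenever B a ≠ B b, there exists y ∈ 𝒳₂ with p a y > 0, p b y > 0, and f a y ≠ f b y. Suppose further that the marginal weights q a = ∑_{y ∈ 𝒳₂} p a y are positive for all a ∈ 𝒳₁. Then B is a proper coloring of the characteristic graph G_{X₁}, and it is a minimum entropy coloring: for every finite type C and every proper coloring c : 𝒳₁ → C of G_{X₁}, H(c) ≥ H(B). -/

import Mathlib

/-- The characteristic graph `G_{X₁}` of `X₁` with respect to `X₂`, the joint weights `p`,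
and the function `f`. -/
def charGraph {X1 X2 Z : Type*} (f : X1 → X2 → Z) (p : X1 → X2 → ℝ) : SimpleGraph X1 where
  Adj a b := a ≠ b ∧ ∃ y, 0 < p a y ∧ 0 < p b y ∧ f a y ≠ f b y
  symm := by
    constructor
    rintro a b ⟨hab, y, h1, h2, h3⟩
    exact ⟨hab.symm, y, h2, h1, h3.symm⟩
  loopless := by
    constructor
    rintro a ⟨h, -⟩
    exact h rfl

/-- The entropy of a map `c : V → C` when the vertices of `V` carry weights `q`:
`H(c) = ∑_σ negMulLog (∑_{v : c v = σ} q v)`. -/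
noncomputable def colorEntropy {V C : Type*} [Fintype V] [Fintype C] [DecidableEq C]
    (q : V → ℝ) (c : V → C) : ℝ :=
  ∑ σ : C, Real.negMulLog (∑ v : V, if c v = σ then q v else 0)

lemma negMulLog_sum_le {α : Type*} (s : Finset α) (w : α → ℝ) (h : ∀ a ∈ s, 0 ≤ w a) :
    Real.negMulLog (∑ a ∈ s, w a) ≤ ∑ a ∈ s, Real.negMulLog (w a) := by
  have hT : ∀ a ∈ s, w a ≤ ∑ b ∈ s, w b := fun a ha => Finset.single_le_sum h ha
  have : Real.negMulLog (∑ a ∈ s, w a)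
      = ∑ a ∈ s, -(w a * Real.log (∑ b ∈ s, w b)) := by
    simp [Real.negMulLog, neg_mul, Finset.sum_mul]
  rw [this]
  apply Finset.sum_le_sum
  intro a ha
  rw [Real.negMulLog, neg_mul]
  rcases eq_or_lt_of_le (h a ha) with h0 | h0
  · simp [← h0]
  · have := Real.log_le_log h0 (hT a ha)
    nlinarith

/-- A pairwise `X₁`-proper block map `B : X1 → ι` is a proper coloring of the characteristic
graph `G_{X₁}` and has minimum entropy among all proper colorings, with respect to positive
marginal weights `q a = ∑ y, p a y`. -/
theorem stmt6 {X1 X2 Z : Type*} [Fintype X1] [Nonempty X1] [Fintype X2] [Nonempty X2]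
    {ι : Type*} [Fintype ι] [DecidableEq ι]
    (f : X1 → X2 → Z) (p : X1 → X2 → ℝ) (hp : ∀ x y, 0 ≤ p x y)
    (B : X1 → ι)
    (hB1 : ∀ a b, B a = B b → ∀ y, 0 < p a y → 0 < p b y → f a y = f b y)
    (hB2 : ∀ a b, B a ≠ B b → ∃ y, 0 < p a y ∧ 0 < p b y ∧ f a y ≠ f b y)
    (q : X1 → ℝ) (hq : ∀ a, q a = ∑ y : X2, p a y) (hqpos : ∀ a, 0 < q a) :
    (∀ a b, (charGraph f p).Adj a b → B a ≠ B b) ∧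
    ∀ (C : Type) [Fintype C] [DecidableEq C] (c : X1 → C),
      (∀ a b, (charGraph f p).Adj a b → c a ≠ c b) →
      colorEntropy q c ≥ colorEntropy q B := by
  classical
  constructor
  · rintro a b ⟨hab, y, h1, h2, h3⟩ hBeq
    exact h3 (hB1 a b hBeq y h1 h2)
  · intro C _ _ c hc
    -- c refines B : if c a = c b then B a = B b
    have hrefine : ∀ a b : X1, c a = c b → B a = B b := by
      intro a b hcab
      by_contra hBab
      obtain ⟨y, h1, h2, h3⟩ := hB2 a b hBab
      have hab : a ≠ b := fun h => hBab (by rw [h])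
      exact hc a b ⟨hab, y, h1, h2, h3⟩ hcab
    set g : C → ι := fun σ =>
      B (if h : ∃ a, c a = σ then h.choose else Classical.arbitrary X1) with hg
    have hgc : ∀ a : X1, g (c a) = B a := by
      intro a
      have h : ∃ b, c b = c a := ⟨a, rfl⟩
      simp only [hg, dif_pos h]
      exact hrefine _ _ h.choose_spec
    set w : C → ℝ := fun σ => ∑ a : X1, if c a = σ then q a else 0 with hw
    have hwnn : ∀ σ, 0 ≤ w σ := by
      intro σ
      apply Finset.sum_nonneg
      intro a _
      split <;> [exact (hqpos a).le; rfl]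
    have key : ∀ i : ι, (∑ a : X1, if B a = i then q a else 0)
        = ∑ σ ∈ Finset.univ.filter (fun σ => g σ = i), w σ := by
      intro i
      rw [Finset.sum_filter]
      simp only [hw]
      have step : ∀ σ : C, (if g σ = i then ∑ a : X1, (if c a = σ then q a else 0) else 0)
          = ∑ a : X1, if c a = σ then (if g σ = i then q a else 0) else 0 := by
        intro σ; by_cases h : g σ = i <;> simp [h]
      rw [Finset.sum_congr rfl fun σ _ => step σ, Finset.sum_comm]
      apply Finset.sum_congr rfl
      intro a _
      rw [Finset.sum_ite_eq Finset.univ (c a) (fun σ => if g σ = i then q a else 0)]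
      simp [hgc a]
    calc colorEntropy q c
        = ∑ i : ι, ∑ σ ∈ Finset.univ.filter (fun σ => g σ = i),
            Real.negMulLog (w σ) := by
          rw [colorEntropy, Finset.sum_fiberwise]
      _ ≥ ∑ i : ι, Real.negMulLog (∑ σ ∈ Finset.univ.filter (fun σ => g σ = i), w σ) := by
          apply Finset.sum_le_sum
          intro i _
          exact negMulLog_sum_le _ _ (fun σ _ => hwnn σ)
      _ = colorEntropy q B := by
          rw [colorEntropy]
          apply Finset.sum_congr rfl
          intro i _
          rw [key i]
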